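/- Fix an integer M ≥ 1 and r ∈ ℝ, and let f : ℝ³ → ℝ³ be the rescaled Lorenz vector field f(x₁,x₂,x₃) = (30x₂ − 30x₁, 3Mx₁r − 3Mx₁x₃ − 3x₂ + 3x₁, 3Mx₁x₂ − 8x₃), with global flow φ. If there exists a continuously differentiable function V : ℝ³ → ℝ such that f(x) · ∇V(x) ≥ (x₂ − x₁)² for all x ∈ ℝ³, then the system is globally stable: for every x ∈ ℝ³, dist(φ(x,t), E) → 0 as t → ∞, where E = {y ∈ ℝ³ : f(y) = 0} is the set of stationary points. -/

import Mathlib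

open Filter Topology Metric Set

/-- Lipschitz on closed balls for C¹ maps. -/
lemma lorenz_lipOnBall (f : EuclideanSpace ℝ (Fin 3) → EuclideanSpace ℝ (Fin 3))
    (hf : ContDiff ℝ 1 f) (R : ℝ) :
    ∃ K : NNReal, LipschitzOnWith K f (closedBall 0 R) := by
  have hc : ContinuousOn (fun y => ‖fderiv ℝ f y‖) (closedBall (0:EuclideanSpace ℝ (Fin 3)) R) :=
    ((hf.continuous_fderiv one_ne_zero).norm).continuousOn
  obtain ⟨C, hC⟩ := (isCompact_closedBall (0:EuclideanSpace ℝ (Fin 3)) R).exists_bound_of_continuousOn hc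
  refine ⟨C.toNNReal, ?_⟩
  apply Convex.lipschitzOnWith_of_nnnorm_hasFDerivWithin_le
    (f' := fun y => fderiv ℝ f y)
    (fun y hy => ((hf.differentiable one_ne_zero) y).hasFDerivAt.hasFDerivWithinAt)
    (fun y hy => ?_) (convex_closedBall _ _)
  have := hC y hy
  rw [norm_norm] at this
  simpa only [← norm_toNNReal] using Real.toNNReal_mono this

/-- The Lorenz vector field is C¹. -/
lemma lorenz_contDiff (M : ℤ) (r : ℝ) (f : EuclideanSpace ℝ (Fin 3) → EuclideanSpace ℝ (Fin 3))
    (hfdef : ∀ x : EuclideanSpace ℝ (Fin 3),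
      f x = ![30 * x 1 - 30 * x 0,
              3 * (M : ℝ) * x 0 * r - 3 * (M : ℝ) * x 0 * x 2 - 3 * x 1 + 3 * x 0,
              3 * (M : ℝ) * x 0 * x 1 - 8 * x 2]) :
    ContDiff ℝ 1 f := by
  rw [contDiff_euclidean]
  simp only [hfdef]
  have hp : ∀ i : Fin 3, ContDiff ℝ 1 (fun x : EuclideanSpace ℝ (Fin 3) => x i) :=
    fun i => by have := (EuclideanSpace.proj (𝕜 := ℝ) i).contDiff (n := 1); exact this
  intro i
  fin_cases i <;>
    simp only [Matrix.cons_val_zero, Matrix.cons_val_one, Matrix.head_cons,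
      Matrix.cons_val_two, Matrix.tail_cons]
  · exact (contDiff_const.mul (hp 1)).sub (contDiff_const.mul (hp 0))
  · exact ((((contDiff_const.mul (hp 0)).mul contDiff_const).sub
      ((contDiff_const.mul (hp 0)).mul (hp 2))).sub (contDiff_const.mul (hp 1))).add
      (contDiff_const.mul (hp 0))
  · exact ((contDiff_const.mul (hp 0)).mul (hp 1)).sub (contDiff_const.mul (hp 2))

/-- Coordinate derivative of the flow. -/
lemma lorenz_coordDeriv (f : EuclideanSpace ℝ (Fin 3) → EuclideanSpace ℝ (Fin 3))
    (φ : EuclideanSpace ℝ (Fin 3) → ℝ → EuclideanSpace ℝ (Fin 3))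
    (hφ' : ∀ x t, HasDerivAt (φ x) (f (φ x t)) t)
    (x : EuclideanSpace ℝ (Fin 3)) (t : ℝ) (i : Fin 3) :
    HasDerivAt (fun s => φ x s i) (f (φ x t) i) t := by
  have := (EuclideanSpace.proj (𝕜 := ℝ) i).hasFDerivAt.comp_hasDerivAt t (hφ' x t)
  exact this

/-- group law from uniqueness -/
lemma lorenz_glaw (f : EuclideanSpace ℝ (Fin 3) → EuclideanSpace ℝ (Fin 3))
    (hf : ContDiff ℝ 1 f)
    (hlip : ∀ R : ℝ, ∃ K : NNReal, LipschitzOnWith K f (closedBall 0 R))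
    (φ : EuclideanSpace ℝ (Fin 3) → ℝ → EuclideanSpace ℝ (Fin 3))
    (hφ0 : ∀ x, φ x 0 = x)
    (hφ' : ∀ x t, HasDerivAt (φ x) (f (φ x t)) t)
    (x : EuclideanSpace ℝ (Fin 3)) (t s : ℝ) :
    φ (φ x t) s = φ x (t + s) := by
  set b := |s| + 1 with hb
  set F : ℝ → EuclideanSpace ℝ (Fin 3) := fun u => φ x (t + u) with hF
  set G : ℝ → EuclideanSpace ℝ (Fin 3) := fun u => φ (φ x t) u with hG
  have hF' : ∀ u, HasDerivAt F (f (F u)) u := by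
    intro u
    have h1 : HasDerivAt (fun u : ℝ => t + u) 1 u := by
      simpa using (hasDerivAt_id u).const_add t
    have := (hφ' x (t + u)).scomp u h1
    rw [one_smul] at this; exact this
  have hG' : ∀ u, HasDerivAt G (f (G u)) u := hφ' _
  have hFc : Continuous F := by
    rw [continuous_iff_continuousAt]; exact fun u => (hF' u).continuousAt
  have hGc : Continuous G := by
    rw [continuous_iff_continuousAt]; exact fun u => (hG' u).continuousAt
  obtain ⟨C1, hC1⟩ := isCompact_Icc.exists_bound_of_continuousOn
    (hFc.continuousOn : ContinuousOn F (Icc (-b) b))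
  obtain ⟨C2, hC2⟩ := isCompact_Icc.exists_bound_of_continuousOn
    (hGc.continuousOn : ContinuousOn G (Icc (-b) b))
  obtain ⟨K, hK⟩ := hlip (max C1 C2)
  have key : EqOn G F (Ioo (-b) b) := by
    apply ODE_solution_unique_of_mem_Ioo (v := fun _ y => f y)
      (s := fun _ => closedBall (0:EuclideanSpace ℝ (Fin 3)) (max C1 C2)) (fun _ _ => hK)
      (t₀ := 0) ⟨by nlinarith [abs_nonneg s], by nlinarith [abs_nonneg s]⟩
    · intro u hu
      refine ⟨hG' u, ?_⟩
      rw [mem_closedBall_zero_iff]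
      exact le_trans (hC2 u (Ioo_subset_Icc_self hu)) (le_max_right _ _)
    · intro u hu
      refine ⟨hF' u, ?_⟩
      rw [mem_closedBall_zero_iff]
      exact le_trans (hC1 u (Ioo_subset_Icc_self hu)) (le_max_left _ _)
    · show G 0 = F 0
      simp [hF, hG, hφ0]
  have hs : s ∈ Ioo (-b) b := by
    constructor
    · nlinarith [neg_abs_le s]
    · nlinarith [le_abs_self s]
  exact key hs

lemma lorenz_coordDeriv' (f : EuclideanSpace ℝ (Fin 3) → EuclideanSpace ℝ (Fin 3))
    (φ : EuclideanSpace ℝ (Fin 3) → ℝ → EuclideanSpace ℝ (Fin 3))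
    (hφ' : ∀ x t, HasDerivAt (φ x) (f (φ x t)) t)
    (x : EuclideanSpace ℝ (Fin 3)) (t : ℝ) (i : Fin 3) :
    HasDerivAt (fun s => φ x s i) (f (φ x t) i) t := by
  have := (EuclideanSpace.proj (𝕜 := ℝ) i).hasFDerivAt.comp_hasDerivAt t (hφ' x t)
  exact this

/-- Forward trajectories have bounded coordinates. -/
lemma lorenz_bounded (M : ℤ) (hM : 1 ≤ M) (r : ℝ)
    (f : EuclideanSpace ℝ (Fin 3) → EuclideanSpace ℝ (Fin 3))
    (hfdef : ∀ x : EuclideanSpace ℝ (Fin 3),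
      f x = ![30 * x 1 - 30 * x 0,
              3 * (M : ℝ) * x 0 * r - 3 * (M : ℝ) * x 0 * x 2 - 3 * x 1 + 3 * x 0,
              3 * (M : ℝ) * x 0 * x 1 - 8 * x 2])
    (φ : EuclideanSpace ℝ (Fin 3) → ℝ → EuclideanSpace ℝ (Fin 3))
    (hφ0 : ∀ x, φ x 0 = x)
    (hφ' : ∀ x t, HasDerivAt (φ x) (f (φ x t)) t)
    (x : EuclideanSpace ℝ (Fin 3)) :
    ∃ R : ℝ, 1 ≤ R ∧ ∀ t, 0 ≤ t → ∀ i, |φ x t i| ≤ R := by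
  have hM1 : (1:ℝ) ≤ (M:ℝ) := by exact_mod_cast hM
  have hMne : (M:ℝ) ≠ 0 := by linarith
  set k : ℝ := r + 11 / (M:ℝ) with hk
  have h66 : 6 * (M:ℝ) * k = 6 * M * r + 66 := by
    rw [hk]; field_simp; ring
  set W : EuclideanSpace ℝ (Fin 3) → ℝ :=
    fun y => (y 0)^2 + (y 1)^2 + (y 2 - k)^2 with hW
  set C : ℝ := 7 * k^2 with hC
  -- pointwise dissipativity inequality
  have hdiss : ∀ y : EuclideanSpace ℝ (Fin 3),
      2 * (y 0) * (f y 0) + 2 * (y 1) * (f y 1) + 2 * (y 2 - k) * (f y 2)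
        + 6 * W y - C ≤ 0 := by
    intro y
    rw [hfdef y]
    simp only [hW, hC, Matrix.cons_val_zero, Matrix.cons_val_one, Matrix.head_cons,
      Matrix.cons_val_two, Matrix.tail_cons]
    have hz : y 0 * y 1 * (66 + 6 * (M:ℝ) * r - 6 * M * k) = 0 := by
      rw [show (66:ℝ) + 6 * M * r - 6 * M * k = 0 by linarith [h66]]
      ring
    nlinarith [sq_nonneg (y 0), sq_nonneg (5 * y 2 - k), hz]
  -- derivative of W along the flow
  have hWd : ∀ t, HasDerivAt (fun t => W (φ x t))
      (2 * (φ x t 0) * (f (φ x t) 0) + 2 * (φ x t 1) * (f (φ x t) 1)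
        + 2 * (φ x t 2 - k) * (f (φ x t) 2)) t := by
    intro t
    have h0 := lorenz_coordDeriv' f φ hφ' x t 0
    have h1 := lorenz_coordDeriv' f φ hφ' x t 1
    have h2 := lorenz_coordDeriv' f φ hφ' x t 2
    have := ((h0.pow 2).add (h1.pow 2)).add ((h2.sub_const k).pow 2)
    refine this.congr_deriv ?_
    push_cast
    ring
  -- the auxiliary decreasing function
  set g : ℝ → ℝ := fun t => (W (φ x t) - C / 6) * Real.exp (6 * t) with hg
  have hgd : ∀ t, HasDerivAt g
      ((2 * (φ x t 0) * (f (φ x t) 0) + 2 * (φ x t 1) * (f (φ x t) 1)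
        + 2 * (φ x t 2 - k) * (f (φ x t) 2)) * Real.exp (6 * t)
        + (W (φ x t) - C / 6) * (Real.exp (6 * t) * 6)) t := by
    intro t
    have he : HasDerivAt (fun t : ℝ => Real.exp (6 * t)) (Real.exp (6 * t) * 6) t := by
      simpa using (((hasDerivAt_id t).const_mul 6).exp)
    exact ((hWd t).sub_const (C / 6)).mul he
  have hganti : Antitone g := by
    apply antitone_of_deriv_nonpos (fun t => (hgd t).differentiableAt)
    intro t
    rw [(hgd t).deriv]
    have hE : 0 < Real.exp (6 * t) := Real.exp_pos _
    have hdi := hdiss (φ x t)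
    have hprod := mul_nonpos_of_nonpos_of_nonneg hdi hE.le
    have h2 : (2 * φ x t 0 * f (φ x t) 0 + 2 * φ x t 1 * f (φ x t) 1
        + 2 * (φ x t 2 - k) * f (φ x t) 2) * Real.exp (6 * t)
        + (W (φ x t) - C / 6) * (Real.exp (6 * t) * 6)
        = (2 * φ x t 0 * f (φ x t) 0 + 2 * φ x t 1 * f (φ x t) 1
        + 2 * (φ x t 2 - k) * f (φ x t) 2 + 6 * W (φ x t) - C) * Real.exp (6 * t) := by
      ring
    rw [h2]
    exact hprod
  -- bound on W along the trajectory
  set D : ℝ := C / 6 + |W x - C / 6| with hD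
  have hWb : ∀ t, 0 ≤ t → W (φ x t) ≤ D := by
    intro t ht
    have h1 : g t ≤ g 0 := hganti ht
    have hgt : g t = (W (φ x t) - C / 6) * Real.exp (6 * t) := rfl
    rw [hgt] at h1
    have hg0 : g 0 = W x - C / 6 := by simp [hg, hφ0]
    have he1 : 1 ≤ Real.exp (6 * t) := by
      rw [show (1:ℝ) = Real.exp 0 by simp]
      exact Real.exp_le_exp.2 (by linarith)
    rw [hg0] at h1
    rcases le_or_gt (W (φ x t) - C / 6) 0 with h | h
    · have : 0 ≤ |W x - C / 6| := abs_nonneg _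
      simp only [hD]; linarith
    · have h2 : W (φ x t) - C / 6 ≤ (W (φ x t) - C / 6) * Real.exp (6 * t) := by
        nlinarith
      have h3 : W x - C / 6 ≤ |W x - C / 6| := le_abs_self _
      simp only [hD]; linarith [h1, h2, h3]
  have hD0 : 0 ≤ D := by
    have := sq_nonneg k
    have := abs_nonneg (W x - C / 6)
    simp only [hD, hC]; nlinarith
  refine ⟨max 1 (Real.sqrt D + |k|), le_max_left _ _, ?_⟩
  intro t ht i
  have hWt := hWb t ht
  have hsq : ∀ a : ℝ, a ^ 2 ≤ D → |a| ≤ Real.sqrt D := by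
    intro a ha
    rw [← Real.sqrt_sq_eq_abs]
    exact Real.sqrt_le_sqrt ha
  have hW0 : (φ x t 0)^2 ≤ D := by
    have h1 := sq_nonneg (φ x t 1); have h2 := sq_nonneg (φ x t 2 - k)
    simp only [hW] at hWt; linarith
  have hW1 : (φ x t 1)^2 ≤ D := by
    have h1 := sq_nonneg (φ x t 0); have h2 := sq_nonneg (φ x t 2 - k)
    simp only [hW] at hWt; linarith
  have hW2 : (φ x t 2 - k)^2 ≤ D := by
    have h1 := sq_nonneg (φ x t 0); have h2 := sq_nonneg (φ x t 1)
    simp only [hW] at hWt; linarith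
  fin_cases i
  · exact le_trans (le_trans (hsq _ hW0) (by linarith [abs_nonneg k])) (le_max_right _ _)
  · exact le_trans (le_trans (hsq _ hW1) (by linarith [abs_nonneg k])) (le_max_right _ _)
  · have := hsq _ hW2
    have habs : |φ x t 2| ≤ |φ x t 2 - k| + |k| := by
      calc |φ x t 2| = |(φ x t 2 - k) + k| := by ring_nf
        _ ≤ |φ x t 2 - k| + |k| := abs_add_le _ _
    exact le_trans (le_trans habs (by linarith)) (le_max_right _ _)

/-- For the rescaled Lorenz vector field (integer `M ≥ 1`, parameter `r`),
if a C¹ function `V` satisfies `f(x) · ∇V(x) ≥ (x₂ - x₁)²` everywhere, then the system is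
globally stable: every trajectory of the global flow converges to the set of stationary
points. -/
theorem rescaled_lorenz_globally_stable
    (M : ℤ) (hM : 1 ≤ M) (r : ℝ)
    (f : EuclideanSpace ℝ (Fin 3) → EuclideanSpace ℝ (Fin 3))
    (hfdef : ∀ x : EuclideanSpace ℝ (Fin 3),
      f x = ![30 * x 1 - 30 * x 0,
              3 * (M : ℝ) * x 0 * r - 3 * (M : ℝ) * x 0 * x 2 - 3 * x 1 + 3 * x 0,
              3 * (M : ℝ) * x 0 * x 1 - 8 * x 2])
    (φ : EuclideanSpace ℝ (Fin 3) → ℝ → EuclideanSpace ℝ (Fin 3))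
    (hφ : ContDiff ℝ 1 (fun p : EuclideanSpace ℝ (Fin 3) × ℝ => φ p.1 p.2))
    (hφ0 : ∀ x, φ x 0 = x)
    (hφ' : ∀ x t, HasDerivAt (φ x) (f (φ x t)) t)
    (V : EuclideanSpace ℝ (Fin 3) → ℝ)
    (hV : ContDiff ℝ 1 V)
    (hVf : ∀ x : EuclideanSpace ℝ (Fin 3), (x 1 - x 0) ^ 2 ≤ fderiv ℝ V x (f x)) :
    ∀ x : EuclideanSpace ℝ (Fin 3),
      Tendsto (fun t => Metric.infDist (φ x t) {y : EuclideanSpace ℝ (Fin 3) | f y = 0})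
        atTop (𝓝 0) := by
  intro x
  set Eset : Set (EuclideanSpace ℝ (Fin 3)) := {y | f y = 0} with hEset
  -- basic facts
  have hfC1 : ContDiff ℝ 1 f := lorenz_contDiff M r f hfdef
  have hlip : ∀ R : ℝ, ∃ K : NNReal, LipschitzOnWith K f (closedBall 0 R) :=
    fun R => lorenz_lipOnBall f hfC1 R
  have hglaw : ∀ z t s, φ (φ z t) s = φ z (t + s) :=
    lorenz_glaw f hfC1 hlip φ hφ0 hφ'
  have hcd : ∀ (z : EuclideanSpace ℝ (Fin 3)) (t : ℝ) (i : Fin 3),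
      HasDerivAt (fun s => φ z s i) (f (φ z t) i) t :=
    fun z t i => lorenz_coordDeriv f φ hφ' z t i
  obtain ⟨R, hR1, hRb⟩ := lorenz_bounded M hM r f hfdef φ hφ0 hφ' x
  have hR0 : (0:ℝ) ≤ R := by linarith
  -- norm bound on the forward trajectory
  have hnorm : ∀ t, 0 ≤ t → ‖φ x t‖ ≤ 3 * R := by
    intro t ht
    have h0 := hRb t ht 0
    have h1 := hRb t ht 1
    have h2 := hRb t ht 2
    rw [EuclideanSpace.norm_eq, Fin.sum_univ_three]
    simp only [Real.norm_eq_abs]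
    have hsum : |φ x t 0| ^ 2 + |φ x t 1| ^ 2 + |φ x t 2| ^ 2 ≤ (3 * R) ^ 2 := by
      nlinarith [abs_nonneg (φ x t 0), abs_nonneg (φ x t 1), abs_nonneg (φ x t 2)]
    calc Real.sqrt (|φ x t 0| ^ 2 + |φ x t 1| ^ 2 + |φ x t 2| ^ 2)
        ≤ Real.sqrt ((3 * R) ^ 2) := Real.sqrt_le_sqrt hsum
      _ = 3 * R := by rw [Real.sqrt_sq (by linarith)]
  have hmem : ∀ t, 0 ≤ t → φ x t ∈ closedBall (0 : EuclideanSpace ℝ (Fin 3)) (3 * R) :=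
    fun t ht => mem_closedBall_zero_iff.mpr (hnorm t ht)
  -- V is bounded above along the trajectory
  obtain ⟨y₀, hy₀mem, hy₀⟩ := (isCompact_closedBall (0 : EuclideanSpace ℝ (Fin 3))
    (3 * R)).exists_isMaxOn ⟨0, mem_closedBall_self (by linarith)⟩ hV.continuous.continuousOn
  -- monotonicity of V along the trajectory
  have hVd : ∀ t, HasDerivAt (fun t => V (φ x t)) (fderiv ℝ V (φ x t) (f (φ x t))) t :=
    fun t => ((hV.differentiable one_ne_zero (φ x t)).hasFDerivAt).comp_hasDerivAt t (hφ' x t)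
  have hmono : Monotone (fun t => V (φ x t)) := by
    apply monotone_of_deriv_nonneg (fun t => (hVd t).differentiableAt)
    intro t
    rw [(hVd t).deriv]
    exact le_trans (sq_nonneg _) (hVf (φ x t))
  have hbdd : BddAbove (range (fun t => V (φ x t))) := by
    refine ⟨V y₀, ?_⟩
    rintro v ⟨t, rfl⟩
    calc V (φ x t) ≤ V (φ x (max t 0)) := hmono (le_max_left _ _)
      _ ≤ V y₀ := hy₀ (hmem _ (le_max_right t 0))
  set L : ℝ := ⨆ t, V (φ x t) with hLdef
  have hL : Tendsto (fun t => V (φ x t)) atTop (𝓝 L) := tendsto_atTop_ciSup hmono hbdd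
  -- suppose the claim fails
  by_contra hcon
  rw [Metric.tendsto_atTop] at hcon
  push_neg at hcon
  obtain ⟨ε, hε, hseq⟩ := hcon
  choose u hu1 hu2 using fun n : ℕ => hseq (n : ℝ)
  have hu0 : ∀ n, (0:ℝ) ≤ u n := fun n => le_trans (Nat.cast_nonneg n) (hu1 n)
  have huT : Tendsto u atTop atTop :=
    tendsto_atTop_mono hu1 tendsto_natCast_atTop_atTop
  have huE : ∀ n, ε ≤ Metric.infDist (φ x (u n)) Eset := by
    intro n
    have h := hu2 n
    rwa [Real.dist_0_eq_abs, abs_of_nonneg Metric.infDist_nonneg] at h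
  -- extract a convergent subsequence
  obtain ⟨p, -, σ, hσmono, hσconv⟩ := tendsto_subseq_of_bounded
    (isBounded_closedBall (x := (0:EuclideanSpace ℝ (Fin 3))) (r := 3 * R))
    (fun n => hmem (u n) (hu0 n))
  set w : ℕ → ℝ := fun n => u (σ n) with hwdef
  have hwT : Tendsto w atTop atTop := huT.comp hσmono.tendsto_atTop
  have hw0 : ∀ n, (0:ℝ) ≤ w n := fun n => hu0 (σ n)
  have hwp : Tendsto (fun n => φ x (w n)) atTop (𝓝 p) := hσconv
  -- the orbit through p is the limit of time-shifts of the trajectory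
  have hcont : ∀ s : ℝ, Continuous fun y => φ y s := fun s =>
    hφ.continuous.comp (continuous_id.prodMk continuous_const)
  have horbit : ∀ s : ℝ, Tendsto (fun n => φ x (w n + s)) atTop (𝓝 (φ p s)) := by
    intro s
    have h1 : Tendsto (fun n => φ (φ x (w n)) s) atTop (𝓝 (φ p s)) :=
      ((hcont s).tendsto p).comp hwp
    simpa only [hglaw] using h1
  -- V is constant (equal to L) on the orbit through p
  have hVL : ∀ s : ℝ, V (φ p s) = L := by
    intro s
    have h1 : Tendsto (fun n => V (φ x (w n + s))) atTop (𝓝 L) :=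
      hL.comp (tendsto_atTop_add_const_right atTop s hwT)
    have h2 : Tendsto (fun n => V (φ x (w n + s))) atTop (𝓝 (V (φ p s))) :=
      (hV.continuous.tendsto (φ p s)).comp (horbit s)
    exact tendsto_nhds_unique h2 h1
  -- hence the derivative of V along the orbit vanishes
  have hfd0 : ∀ s : ℝ, fderiv ℝ V (φ p s) (f (φ p s)) = 0 := by
    intro s
    have h1 : HasDerivAt (fun s => V (φ p s)) (fderiv ℝ V (φ p s) (f (φ p s))) s :=
      ((hV.differentiable one_ne_zero (φ p s)).hasFDerivAt).comp_hasDerivAt s (hφ' p s)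
    have h2 : (fun s => V (φ p s)) = fun _ => L := funext hVL
    rw [h2] at h1
    exact h1.unique (hasDerivAt_const s L)
  -- hence the orbit lies in the plane x₁ = x₀
  have heq10 : ∀ s : ℝ, φ p s 1 = φ p s 0 := by
    intro s
    have h := hVf (φ p s)
    rw [hfd0 s] at h
    have h2 : (φ p s 1 - φ p s 0) ^ 2 = 0 := le_antisymm h (sq_nonneg _)
    have h3 := pow_eq_zero_iff (n := 2) (by norm_num) |>.mp h2
    linarith [h3]
  -- the first coordinate is constant along the orbit
  have hd0 : ∀ s : ℝ, HasDerivAt (fun s => φ p s 0) 0 s := by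
    intro s
    have h1 := hcd p s 0
    rw [hfdef (φ p s)] at h1
    simp only [Matrix.cons_val_zero] at h1
    convert h1 using 1
    rw [heq10 s]; ring
  have hconst0 : ∀ s : ℝ, φ p s 0 = p 0 := by
    intro s
    have h := is_const_of_deriv_eq_zero (𝕜 := ℝ) (f := fun s => φ p s 0)
      (fun s => (hd0 s).differentiableAt) (fun s => (hd0 s).deriv) s 0
    simpa [hφ0] using h
  have hconst1 : ∀ s : ℝ, φ p s 1 = p 0 := fun s => (heq10 s).trans (hconst0 s)
  have hp1 : p 1 = p 0 := by
    have := heq10 0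
    rwa [hφ0] at this
  -- the second component of f vanishes along the orbit
  have hf1zero : ∀ s : ℝ, f (φ p s) 1 = 0 := by
    intro s
    have h1 := hcd p s 1
    have h2 : (fun s => φ p s 1) = fun _ => p 0 := funext hconst1
    rw [h2] at h1
    exact h1.unique (hasDerivAt_const s (p 0))
  have h3Mc : ∀ s : ℝ, 3 * (M:ℝ) * p 0 * (r - φ p s 2) = 0 := by
    intro s
    have h := hf1zero s
    rw [hfdef (φ p s)] at h
    simp only [Matrix.cons_val_one, Matrix.head_cons, Matrix.cons_val_zero] at h
    rw [hconst0 s, hconst1 s] at h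
    linear_combination h
  -- in either case, p is a stationary point
  have hfp : f p = 0 := by
    by_cases hc : p 0 = 0
    · -- on the z-axis: exponential decay backward in time forces p₂ = 0
      have hd2 : ∀ s : ℝ, HasDerivAt (fun s => φ p s 2) (-8 * φ p s 2) s := by
        intro s
        have h1 := hcd p s 2
        rw [hfdef (φ p s)] at h1
        simp only [Matrix.cons_val_two, Matrix.tail_cons, Matrix.head_cons] at h1
        convert h1 using 1
        rw [hconst0 s, hc]; ring
      have hexp : ∀ s : ℝ, HasDerivAt (fun s : ℝ => Real.exp (8 * s)) (Real.exp (8 * s) * 8) s :=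
        fun s => by simpa using (((hasDerivAt_id s).const_mul 8).exp)
      have hprod : ∀ s : ℝ, HasDerivAt (fun s => φ p s 2 * Real.exp (8 * s)) 0 s := by
        intro s
        have := (hd2 s).mul (hexp s)
        refine this.congr_deriv ?_
        ring
      have hψ20 : ∀ s : ℝ, φ p s 2 * Real.exp (8 * s) = p 2 := by
        intro s
        have h := is_const_of_deriv_eq_zero (𝕜 := ℝ) (f := fun s => φ p s 2 * Real.exp (8 * s))
          (fun s => (hprod s).differentiableAt) (fun s => (hprod s).deriv) s 0
        simpa [hφ0] using h
      have hψ2bdd : ∀ s : ℝ, |φ p s 2| ≤ R := by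
        intro s
        have h1 : Tendsto (fun n => φ x (w n + s) 2) atTop (𝓝 (φ p s 2)) := by
          have := ((EuclideanSpace.proj (𝕜 := ℝ) (2 : Fin 3)).continuous.tendsto (φ p s)).comp
            (horbit s)
          exact this
        apply le_of_tendsto h1.abs
        filter_upwards [hwT.eventually_ge_atTop (-s)] with n hn
        exact hRb (w n + s) (by linarith) 2
      have hb : ∀ s : ℝ, |p 2| ≤ R * Real.exp (8 * s) := by
        intro s
        rw [← hψ20 s, abs_mul, abs_of_pos (Real.exp_pos _)]
        exact mul_le_mul_of_nonneg_right (hψ2bdd s) (Real.exp_pos _).le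
      have hlim : Tendsto (fun s : ℝ => R * Real.exp (8 * s)) atBot (𝓝 0) := by
        have h8 : Tendsto (fun s : ℝ => 8 * s) atBot atBot :=
          (tendsto_const_mul_atBot_of_pos (by norm_num)).mpr tendsto_id
        have := (Real.tendsto_exp_atBot.comp h8).const_mul R
        simpa using this
      have hp2abs : |p 2| ≤ 0 := ge_of_tendsto hlim (Eventually.of_forall hb)
      have hp2 : p 2 = 0 := abs_eq_zero.mp (le_antisymm hp2abs (abs_nonneg _))
      ext i
      rw [hfdef p]
      fin_cases i <;>
        simp [hp1, hc, hp2]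
    · -- off the axis: the orbit is an equilibrium
      have hMpos : (0:ℝ) < (M:ℝ) := by exact_mod_cast lt_of_lt_of_le zero_lt_one hM
      have hψ2 : ∀ s : ℝ, φ p s 2 = r := by
        intro s
        have h := h3Mc s
        have h3 : (3:ℝ) * (M:ℝ) * p 0 ≠ 0 := by
          apply mul_ne_zero (mul_ne_zero (by norm_num) (ne_of_gt hMpos)) hc
        have := (mul_eq_zero.mp h).resolve_left h3
        linarith
      have hp2 : p 2 = r := by
        have := hψ2 0
        rwa [hφ0] at this
      have hf2zero : f p 2 = 0 := by
        have h1 := hcd p 0 2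
        have h2 : (fun s => φ p s 2) = fun _ => r := funext hψ2
        rw [h2] at h1
        have := h1.unique (hasDerivAt_const 0 r)
        rwa [hφ0] at this
      have hf1z : f p 1 = 0 := by
        have := hf1zero 0
        rwa [hφ0] at this
      ext i
      fin_cases i
      · rw [hfdef p]; simp [hp1]
      · show f p 1 = 0
        rw [hf1z]
      · show f p 2 = 0
        rw [hf2zero]
  -- contradiction with the distance staying ≥ ε
  have hpE : p ∈ Eset := hfp
  have hdistlim : Tendsto (fun n => Metric.infDist (φ x (w n)) Eset) atTop
      (𝓝 (Metric.infDist p Eset)) :=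
    ((Metric.continuous_infDist_pt Eset).tendsto p).comp hwp
  have hge : ε ≤ Metric.infDist p Eset :=
    ge_of_tendsto hdistlim (Eventually.of_forall fun n => huE (σ n))
  rw [Metric.infDist_zero_of_mem hpE] at hge
  linarith
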